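/- Let X be a graph with chromatic number 3 and without isolated vertices. Then for every triangle C₁C₂C₃ in the 3-coloring complex B(X), the sets C₁, C₂, C₃ form a 3-coloring of X (that is, {C₁, C₂, C₃} is a partition of V(X) into independent sets); consequently, every edge of B(X) is contained in exactly one triangle of B(X). -/

import Mathlib

open SimpleGraph

/-- A `k`-coloring of a graph `X`: a partition of the vertex set into `k`
(possibly empty) independent sets, the color classes of the coloring. -/
def IsColoring {V : Type*} (k : ℕ) (X : SimpleGraph V) (c : Fin k → Set V) : Prop :=
  (∀ v : V, ∃! i : Fin k, v ∈ c i) ∧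
  ∀ i : Fin k, ∀ u ∈ c i, ∀ w ∈ c i, ¬ X.Adj u w

/-- `S` occurs as a color class in some `k`-coloring of `X`. -/
def IsColorClass {V : Type*} (k : ℕ) (X : SimpleGraph V) (S : Set V) : Prop :=
  ∃ c : Fin k → Set V, IsColoring k X c ∧ ∃ i, c i = S

/-- The `k`-coloring complex `B(X)`: vertices are the color classes of
`k`-colorings of `X`, two of them adjacent if they occur together in some
`k`-coloring of `X`. -/
def ColoringComplex {V : Type*} (k : ℕ) (X : SimpleGraph V) :
    SimpleGraph {S : Set V // IsColorClass k X S} where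
  Adj C D := C ≠ D ∧ ∃ c : Fin k → Set V,
    IsColoring k X c ∧ (∃ i, c i = C.1) ∧ (∃ j, c j = D.1)
  symm := by
    constructor
    rintro C D ⟨hne, c, hc, hi, hj⟩
    exact ⟨hne.symm, c, hc, hj, hi⟩
  loopless := by constructor; rintro C ⟨hne, -⟩; exact hne rfl

/-- The canonical map `φ_X`, sending a vertex `v` to the set of all color
classes containing `v`. -/
def phi {V : Type*} (k : ℕ) (X : SimpleGraph V) (v : V) :
    Set {S : Set V // IsColorClass k X S} :=
  {C | v ∈ C.1}

/-- `X` is reflexive for `k`-colorings: the canonical map `φ_X` is a graph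
isomorphism from `X` onto `B²(X) = B(B(X))`. -/
def IsReflexive {V : Type*} (k : ℕ) (X : SimpleGraph V) : Prop :=
  ∃ f : X ≃g ColoringComplex k (ColoringComplex k X),
    ∀ v : V, (f v : {T // IsColorClass k (ColoringComplex k X) T}).1 = phi k X v

/-- `X` is colorful for `k`-colorings: any two distinct vertices lie in
different color classes of some `k`-coloring of `X`. -/
def Colorful {V : Type*} (k : ℕ) (X : SimpleGraph V) : Prop :=
  ∀ x y : V, x ≠ y → ∃ c : Fin k → Set V, IsColoring k X c ∧
    ∃ i j : Fin k, i ≠ j ∧ x ∈ c i ∧ y ∈ c j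


section Aux

variable {V : Type*} {X : SimpleGraph V}

private lemma fin3_eq_third {i j k l : Fin 3} (h1 : i ≠ j) (h2 : i ≠ k) (h3 : j ≠ k)
    (h4 : l ≠ i) (h5 : l ≠ j) : l = k := by omega

private lemma fin3_mem_pair {i j k l : Fin 3} (h1 : i ≠ j) (h2 : i ≠ k) (h3 : j ≠ k)
    (h4 : l ≠ k) : l = i ∨ l = j := by omega

private lemma fin3_exists_third (i j : Fin 3) (h : i ≠ j) : ∃ k, i ≠ k ∧ j ≠ k := by
  fin_cases i <;> fin_cases j <;> simp_all <;> decide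

private lemma coloring_disj {c : Fin 3 → Set V} (hc : IsColoring 3 X c)
    {i j : Fin 3} (hij : i ≠ j) {v : V} (hvi : v ∈ c i) : v ∉ c j := fun hvj => by
  obtain ⟨l, _, hu⟩ := hc.1 v
  exact hij ((hu i hvi).trans (hu j hvj).symm)

private lemma coloring_third {c : Fin 3 → Set V} (hc : IsColoring 3 X c)
    {i j k : Fin 3} (hij : i ≠ j) (hik : i ≠ k) (hjk : j ≠ k)
    {v : V} (hvi : v ∉ c i) (hvj : v ∉ c j) : v ∈ c k := by
  obtain ⟨l, hl, _⟩ := hc.1 v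
  have : l = k := fin3_eq_third hij hik hjk
    (fun h => hvi (h ▸ hl)) (fun h => hvj (h ▸ hl))
  exact this ▸ hl

/-- `A` and `B` occur together as distinct classes of some 3-coloring. -/
private def Joint (X : SimpleGraph V) (A B : Set V) : Prop :=
  A ≠ B ∧ ∃ c : Fin 3 → Set V, IsColoring 3 X c ∧ (∃ i, c i = A) ∧ (∃ j, c j = B)

private lemma adj_joint {C D : {S : Set V // IsColorClass 3 X S}}
    (h : (ColoringComplex 3 X).Adj C D) : Joint X C.1 D.1 := by
  obtain ⟨hne, c, hc, hi, hj⟩ := h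
  exact ⟨fun h => hne (Subtype.ext h), c, hc, hi, hj⟩

private lemma joint_disj {A B : Set V} (h : Joint X A B)
    {v : V} (hv : v ∈ A) : v ∉ B := by
  obtain ⟨hne, c, hc, ⟨i, hi⟩, ⟨j, hj⟩⟩ := h
  have hij : i ≠ j := fun he => hne (hi ▸ he ▸ hj)
  exact hj ▸ coloring_disj hc hij (hi.symm ▸ hv)

private lemma joint_nbr {A B : Set V} (h : Joint X A B)
    {v u : V} (hvA : v ∉ A) (hvB : v ∉ B) (hadj : X.Adj v u) : u ∈ A ∪ B := by
  obtain ⟨hne, c, hc, ⟨i, hi⟩, ⟨j, hj⟩⟩ := h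
  have hij : i ≠ j := fun he => hne (hi ▸ he ▸ hj)
  obtain ⟨k, hik, hjk⟩ := fin3_exists_third i j hij
  have hvk : v ∈ c k := coloring_third hc hij hik hjk (hi.symm ▸ hvA) (hj.symm ▸ hvB)
  obtain ⟨l, hl, _⟩ := hc.1 u
  have hlk : l ≠ k := fun he => hc.2 k v hvk u (he ▸ hl) hadj
  rcases fin3_mem_pair hij hik hjk hlk with rfl | rfl
  · exact Or.inl (hi ▸ hl)
  · exact Or.inr (hj ▸ hl)

private lemma class_indep {S : Set V} (h : IsColorClass 3 X S) :
    ∀ u ∈ S, ∀ w ∈ S, ¬ X.Adj u w := by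
  obtain ⟨c, hc, i, rfl⟩ := h
  exact hc.2 i

private lemma triangle_part1 (X : SimpleGraph V) (hnoiso : ∀ v : V, ∃ u, X.Adj v u)
    (C₁ C₂ C₃ : {S : Set V // IsColorClass 3 X S})
    (h12 : (ColoringComplex 3 X).Adj C₁ C₂) (h23 : (ColoringComplex 3 X).Adj C₂ C₃)
    (h13 : (ColoringComplex 3 X).Adj C₁ C₃) :
    IsColoring 3 X ![C₁.1, C₂.1, C₃.1] := by
  have J12 := adj_joint h12
  have J23 := adj_joint h23
  have J13 := adj_joint h13
  have cover : ∀ v : V, v ∉ C₁.1 → v ∉ C₂.1 → v ∈ C₃.1 := by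
    intro v hv1 hv2
    by_contra hv3
    obtain ⟨u, hadj⟩ := hnoiso v
    have hu12 := joint_nbr J12 hv1 hv2 hadj
    have hu23 := joint_nbr J23 hv2 hv3 hadj
    have hu13 := joint_nbr J13 hv1 hv3 hadj
    rcases hu12 with h1 | h2
    · rcases hu23 with h2 | h3
      · exact joint_disj J12 h1 h2
      · exact joint_disj J13 h1 h3
    · rcases hu13 with h1 | h3
      · exact joint_disj J12 h1 h2
      · exact joint_disj J23 h2 h3
  constructor
  · intro v
    by_cases hv1 : v ∈ C₁.1
    · refine ⟨0, hv1, ?_⟩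
      intro i hi
      fin_cases i
      · rfl
      · simp only [Matrix.cons_val_one, Matrix.head_cons] at hi
        exact absurd hi (joint_disj J12 hv1)
      · simp only [Matrix.cons_val_two, Matrix.tail_cons, Matrix.head_cons] at hi
        exact absurd hi (joint_disj J13 hv1)
    · by_cases hv2 : v ∈ C₂.1
      · refine ⟨1, hv2, ?_⟩
        intro i hi
        fin_cases i
        · simp only [Matrix.cons_val_zero] at hi
          exact absurd hv2 (joint_disj J12 hi)
        · rfl
        · simp only [Matrix.cons_val_two, Matrix.tail_cons, Matrix.head_cons] at hi
          exact absurd hi (joint_disj J23 hv2)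
      · refine ⟨2, cover v hv1 hv2, ?_⟩
        intro i hi
        fin_cases i
        · simp only [Matrix.cons_val_zero] at hi
          exact absurd hi hv1
        · simp only [Matrix.cons_val_one, Matrix.head_cons] at hi
          exact absurd hi hv2
        · rfl
  · intro i
    fin_cases i
    · simpa using class_indep C₁.2
    · simpa using class_indep C₂.2
    · simpa using class_indep C₃.2

end Aux

/-- In the 3-coloring complex of a 3-chromatic graph without isolated
vertices, every triangle represents a 3-coloring of `X`, and every edge lies
in exactly one triangle. -/
theorem triangle_in_complex_is_coloring {V : Type*} (X : SimpleGraph V)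
    (hchrom : X.chromaticNumber = 3)
    (hnoiso : ∀ v : V, ∃ u, X.Adj v u) :
    (∀ C₁ C₂ C₃ : {S : Set V // IsColorClass 3 X S},
      (ColoringComplex 3 X).Adj C₁ C₂ → (ColoringComplex 3 X).Adj C₂ C₃ →
      (ColoringComplex 3 X).Adj C₁ C₃ →
      IsColoring 3 X ![C₁.1, C₂.1, C₃.1]) ∧
    (∀ C D : {S : Set V // IsColorClass 3 X S}, (ColoringComplex 3 X).Adj C D →
      ∃! F, (ColoringComplex 3 X).Adj C F ∧ (ColoringComplex 3 X).Adj D F) := by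
  classical
  refine ⟨triangle_part1 X hnoiso, ?_⟩
  intro C D hCD
  have hCD' := hCD
  obtain ⟨hne, c, hc, ⟨i, hi⟩, ⟨j, hj⟩⟩ := hCD
  have hne' : C.1 ≠ D.1 := fun h => hne (Subtype.ext h)
  have hij : i ≠ j := fun he => hne' (hi ▸ he ▸ hj)
  obtain ⟨k, hik, hjk⟩ := fin3_exists_third i j hij
  have hFclass : IsColorClass 3 X (c k) := ⟨c, hc, k, rfl⟩
  -- `c k` is nonempty since χ(X) = 3
  have hFne : (c k).Nonempty := by
    rw [Set.nonempty_iff_ne_empty]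
    intro hFe
    have memD : ∀ v : V, v ∉ C.1 → v ∈ D.1 := by
      intro v hv
      have : v ∈ c j := coloring_third hc hik hij (Ne.symm hjk)
        (hi.symm ▸ hv) (fun h => Set.notMem_empty v (hFe ▸ h))
      exact hj ▸ this
    have hcol : X.Colorable 2 := by
      refine ⟨SimpleGraph.Coloring.mk (fun v => if v ∈ C.1 then 0 else 1) ?_⟩
      intro u w hadj heq
      by_cases hu : u ∈ C.1 <;> by_cases hw : w ∈ C.1
      · exact class_indep C.2 u hu w hw hadj
      · simp [hu, hw] at heq
      · simp [hu, hw] at heq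
      · exact class_indep D.2 u (memD u hu) w (memD w hw) hadj
    have h2 := hcol.chromaticNumber_le
    rw [hchrom] at h2
    norm_num at h2
  obtain ⟨x, hx⟩ := hFne
  have hCF : C.1 ≠ c k := fun h => coloring_disj hc hik ((hi.trans h).symm ▸ hx) hx
  have hDF : D.1 ≠ c k := fun h => coloring_disj hc hjk ((hj.trans h).symm ▸ hx) hx
  refine ⟨⟨c k, hFclass⟩, ⟨⟨fun h => hCF (congrArg Subtype.val h), c, hc, ⟨i, hi⟩, ⟨k, rfl⟩⟩,
    ⟨fun h => hDF (congrArg Subtype.val h), c, hc, ⟨j, hj⟩, ⟨k, rfl⟩⟩⟩, ?_⟩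
  rintro F' ⟨h1, h2⟩
  have hcol' := triangle_part1 X hnoiso C D F' hCD' h2 h1
  apply Subtype.ext
  show F'.1 = c k
  ext v
  have e0 : (![C.1, D.1, F'.1] : Fin 3 → Set V) 0 = C.1 := rfl
  have e1 : (![C.1, D.1, F'.1] : Fin 3 → Set V) 1 = D.1 := rfl
  have e2 : (![C.1, D.1, F'.1] : Fin 3 → Set V) 2 = F'.1 := rfl
  constructor
  · intro hv
    have hv2 : v ∈ (![C.1, D.1, F'.1] : Fin 3 → Set V) 2 := e2.symm ▸ hv
    have hv0 : v ∉ C.1 := e0 ▸ coloring_disj hcol' (show (2:Fin 3) ≠ 0 by decide) hv2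
    have hv1 : v ∉ D.1 := e1 ▸ coloring_disj hcol' (show (2:Fin 3) ≠ 1 by decide) hv2
    exact coloring_third hc hij hik hjk (hi.symm ▸ hv0) (hj.symm ▸ hv1)
  · intro hv
    have hv0 : v ∉ C.1 := fun h => coloring_disj hc (Ne.symm hik) hv (hi.symm ▸ h)
    have hv1 : v ∉ D.1 := fun h => coloring_disj hc (Ne.symm hjk) hv (hj.symm ▸ h)
    have := coloring_third hcol' (show (0:Fin 3) ≠ 1 by decide)
      (show (0:Fin 3) ≠ 2 by decide) (show (1:Fin 3) ≠ 2 by decide)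
      (e0.symm ▸ hv0) (e1.symm ▸ hv1)
    exact e2 ▸ this
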